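/- Let S be a countable regular semigroup each of whose maximal subgroups is finite. Then S is ℵ₀-categorical if and only if, for every n ≥ 1, the restriction of the relation ~_{S,n} to E(S)^n has only finitely many equivalence classes. -/
import Mathlib


/-- Two `n`-tuples of a semigroup are automorphically equivalent if some semigroup
automorphism maps one to the other componentwise. -/
def AutRel (S : Type*) [Semigroup S] {n : ℕ} (a b : Fin n → S) : Prop :=
  ∃ φ : S ≃* S, ∀ k, φ (a k) = b k

/-- A semigroup is ℵ₀-categorical if, for every `n ≥ 1`, the action of its automorphism
group on `n`-tuples has only finitely many orbits. -/
def Aleph0Categorical (S : Type*) [Semigroup S] : Prop :=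
  ∀ n : ℕ, 1 ≤ n → ∃ t : Set (Fin n → S), t.Finite ∧
    ∀ a : Fin n → S, ∃ b ∈ t, AutRel S b a

section Green

variable (S : Type*) [Semigroup S]

/-- Green's relation `R`: equality of principal right ideals `{a} ∪ aS`. -/
def GreenR (a b : S) : Prop :=
  ({a} ∪ {x | ∃ s, x = a * s} : Set S) = ({b} ∪ {x | ∃ s, x = b * s} : Set S)

/-- Green's relation `L`: equality of principal left ideals `{a} ∪ Sa`. -/
def GreenL (a b : S) : Prop :=
  ({a} ∪ {x | ∃ s, x = s * a} : Set S) = ({b} ∪ {x | ∃ s, x = s * b} : Set S)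

/-- Green's relation `H = R ∩ L`. -/
def GreenH (a b : S) : Prop := GreenR S a b ∧ GreenL S a b

end Green

namespace AuxGreen

variable {S : Type*} [Semigroup S]

def RId (a : S) : Set S := ({a} ∪ {x | ∃ s, x = a * s} : Set S)
def LId (a : S) : Set S := ({a} ∪ {x | ∃ s, x = s * a} : Set S)

lemma mem_RId {a x : S} : x ∈ RId a ↔ (x = a ∨ ∃ s, x = a * s) := by
  simp [RId, Set.mem_union]

lemma mem_LId {a x : S} : x ∈ LId a ↔ (x = a ∨ ∃ s, x = s * a) := by
  simp [LId, Set.mem_union]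

lemma RId_subset {a x : S} (h : x ∈ RId a) : RId x ⊆ RId a := by
  rcases mem_RId.1 h with rfl | ⟨s, rfl⟩
  · exact le_refl _
  · intro y hy
    rcases mem_RId.1 hy with rfl | ⟨t, rfl⟩
    · exact mem_RId.2 (Or.inr ⟨s, rfl⟩)
    · exact mem_RId.2 (Or.inr ⟨s * t, mul_assoc _ _ _⟩)

lemma LId_subset {a x : S} (h : x ∈ LId a) : LId x ⊆ LId a := by
  rcases mem_LId.1 h with rfl | ⟨s, rfl⟩
  · exact le_refl _
  · intro y hy
    rcases mem_LId.1 hy with rfl | ⟨t, rfl⟩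
    · exact mem_LId.2 (Or.inr ⟨s, rfl⟩)
    · exact mem_LId.2 (Or.inr ⟨t * s, (mul_assoc _ _ _).symm⟩)

lemma greenR_iff {a b : S} : GreenR S a b ↔ a ∈ RId b ∧ b ∈ RId a := by
  constructor
  · intro h
    have h' : RId a = RId b := h
    constructor
    · rw [← h']; exact mem_RId.2 (Or.inl rfl)
    · rw [h']; exact mem_RId.2 (Or.inl rfl)
  · rintro ⟨h1, h2⟩
    exact Set.Subset.antisymm (RId_subset h1) (RId_subset h2)

lemma greenL_iff {a b : S} : GreenL S a b ↔ a ∈ LId b ∧ b ∈ LId a := by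
  constructor
  · intro h
    have h' : LId a = LId b := h
    constructor
    · rw [← h']; exact mem_LId.2 (Or.inl rfl)
    · rw [h']; exact mem_LId.2 (Or.inl rfl)
  · rintro ⟨h1, h2⟩
    exact Set.Subset.antisymm (LId_subset h1) (LId_subset h2)

lemma greenR_symm {a b : S} (h : GreenR S a b) : GreenR S b a := (Eq.symm h : _)
lemma greenL_symm {a b : S} (h : GreenL S a b) : GreenL S b a := (Eq.symm h : _)
lemma greenR_trans {a b c : S} (h : GreenR S a b) (h' : GreenR S b c) : GreenR S a c :=
  (Eq.trans h h' : _)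
lemma greenL_trans {a b c : S} (h : GreenL S a b) (h' : GreenL S b c) : GreenL S a c :=
  (Eq.trans h h' : _)

lemma mem_RId_map (φ : S ≃* S) {a x : S} (h : x ∈ RId a) : φ x ∈ RId (φ a) := by
  rcases mem_RId.1 h with rfl | ⟨s, rfl⟩
  · exact mem_RId.2 (Or.inl rfl)
  · exact mem_RId.2 (Or.inr ⟨φ s, by rw [map_mul]⟩)

lemma mem_LId_map (φ : S ≃* S) {a x : S} (h : x ∈ LId a) : φ x ∈ LId (φ a) := by
  rcases mem_LId.1 h with rfl | ⟨s, rfl⟩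
  · exact mem_LId.2 (Or.inl rfl)
  · exact mem_LId.2 (Or.inr ⟨φ s, by rw [map_mul]⟩)

lemma greenR_map (φ : S ≃* S) {a b : S} (h : GreenR S a b) : GreenR S (φ a) (φ b) := by
  rcases greenR_iff.1 h with ⟨h1, h2⟩
  exact greenR_iff.2 ⟨mem_RId_map φ h1, mem_RId_map φ h2⟩

lemma greenL_map (φ : S ≃* S) {a b : S} (h : GreenL S a b) : GreenL S (φ a) (φ b) := by
  rcases greenL_iff.1 h with ⟨h1, h2⟩
  exact greenL_iff.2 ⟨mem_LId_map φ h1, mem_LId_map φ h2⟩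

/-- Existence of a (von Neumann) inverse of a regular element. -/
lemma exists_inverse (hreg : ∀ a : S, ∃ x : S, a * x * a = a) (a : S) :
    ∃ a' : S, a * a' * a = a ∧ a' * a * a' = a' := by
  obtain ⟨x, hx⟩ := hreg a
  have h1 : a * (x * a) = a := by rw [← mul_assoc]; exact hx
  have h2 : a * (x * (a * x)) = a * x := by
    rw [← mul_assoc, ← mul_assoc, hx]
  refine ⟨x * a * x, ?_, ?_⟩
  · show a * (x * a * x) * a = a
    simp only [mul_assoc]
    rw [h1, h1]
  · show (x * a * x) * a * (x * a * x) = x * a * x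
    simp only [mul_assoc]
    rw [h2, h2]

lemma idem_e {a a' : S} (h2 : a' * a * a' = a') : (a * a') * (a * a') = a * a' := by
  have h2' : a' * (a * a') = a' := by rw [← mul_assoc]; exact h2
  simp only [mul_assoc]
  rw [h2']

lemma idem_f {a a' : S} (h2 : a' * a * a' = a') : (a' * a) * (a' * a) = a' * a := by
  calc (a' * a) * (a' * a) = (a' * a * a') * a := by simp only [mul_assoc]
    _ = a' * a := by rw [h2]

/-- Every `H`-class of a regular semigroup with finite maximal subgroups is finite. -/
lemma hclass_finite (hreg : ∀ a : S, ∃ x : S, a * x * a = a)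
    (hfin : ∀ e : S, e * e = e → {b : S | GreenH S e b}.Finite) (a : S) :
    {x | GreenH S a x}.Finite := by
  obtain ⟨a', haa'a, ha'aa'⟩ := exists_inverse hreg a
  have ha1 : a * (a' * a) = a := by rw [← mul_assoc]; exact haa'a
  have hff : (a' * a) * (a' * a) = a' * a := idem_f ha'aa'
  -- key: for x H a, a * (a' * x) = x
  have key : ∀ x ∈ {x | GreenH S a x}, a * (a' * x) = x := by
    rintro x ⟨hR, _⟩
    rcases mem_RId.1 (greenR_iff.1 hR).2 with hx | ⟨s, hx⟩
    · rw [hx]; exact ha1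
    · rw [hx]
      calc a * (a' * (a * s)) = (a * a' * a) * s := by simp only [mul_assoc]
        _ = a * s := by rw [haa'a]
  have maps : ∀ x ∈ {x | GreenH S a x}, a' * x ∈ {b | GreenH S (a' * a) b} := by
    rintro x hx
    obtain ⟨hR, hL⟩ := hx
    have hax : a * (a' * x) = x := key x ⟨hR, hL⟩
    constructor
    · -- GreenR (a'*a) (a' * x)
      refine greenR_iff.2 ⟨?_, ?_⟩
      · -- a' * a ∈ RId (a' * x)
        rcases mem_RId.1 (greenR_iff.1 hR).1 with ha | ⟨t, ha⟩
        · exact mem_RId.2 (Or.inl (by rw [ha]))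
        · exact mem_RId.2 (Or.inr ⟨t, by rw [ha, ← mul_assoc]⟩)
      · -- a' * x ∈ RId (a' * a)
        refine mem_RId.2 (Or.inr ⟨a' * x, ?_⟩)
        rw [mul_assoc, hax]
    · -- GreenL (a'*a) (a' * x)
      refine greenL_iff.2 ⟨?_, ?_⟩
      · -- a' * a ∈ LId (a' * x)
        rcases mem_LId.1 (greenL_iff.1 hL).1 with ha | ⟨u, ha⟩
        · exact mem_LId.2 (Or.inl (by rw [ha]))
        · refine mem_LId.2 (Or.inr ⟨a' * u * a, ?_⟩)
          rw [mul_assoc, hax, ha, ← mul_assoc]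
      · -- a' * x ∈ LId (a' * a)
        rcases mem_LId.1 (greenL_iff.1 hL).2 with hx2 | ⟨s, hx2⟩
        · exact mem_LId.2 (Or.inl (by rw [hx2]))
        · refine mem_LId.2 (Or.inr ⟨a' * s * a, ?_⟩)
          simp only [mul_assoc]
          rw [ha1, hx2]
  have hinj : Set.InjOn (fun x => a' * x) {x | GreenH S a x} := by
    intro x hx y hy hxy
    have hxy' : a * (a' * x) = a * (a' * y) := by
      simp only at hxy; rw [hxy]
    rw [key x hx, key y hy] at hxy'
    exact hxy'
  exact Set.Finite.of_finite_image
    ((hfin (a' * a) hff).subset (Set.image_subset_iff.2 maps)) hinj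

/-- The intersection of an `R`-class and an `L`-class is finite. -/
lemma RL_inter_finite (hreg : ∀ a : S, ∃ x : S, a * x * a = a)
    (hfin : ∀ e : S, e * e = e → {b : S | GreenH S e b}.Finite) (e f : S) :
    {x | GreenR S e x ∧ GreenL S f x}.Finite := by
  rcases Set.eq_empty_or_nonempty {x | GreenR S e x ∧ GreenL S f x} with h | ⟨x₀, hx₀⟩
  · simp [h]
  · refine (hclass_finite hreg hfin x₀).subset ?_
    rintro x ⟨hR, hL⟩
    exact ⟨greenR_trans (greenR_symm hx₀.1) hR, greenL_trans (greenL_symm hx₀.2) hL⟩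

/-- Interleaving two `n`-tuples into a `2n`-tuple. -/
def interleave {S : Type*} (n : ℕ) (e f : Fin n → S) : Fin (2 * n) → S :=
  fun j => if h : (j : ℕ) < n then e ⟨j, h⟩
    else f ⟨(j : ℕ) - n, by have := j.isLt; omega⟩

lemma interleave_lo {S : Type*} {n : ℕ} (e f : Fin n → S) (m : ℕ) (hm : m < n)
    (hk : m < 2 * n) : interleave n e f ⟨m, hk⟩ = e ⟨m, hm⟩ := by
  simp [interleave, hm]

lemma interleave_hi {S : Type*} {n : ℕ} (e f : Fin n → S) (m : ℕ) (hm : m < n)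
    (hk : n + m < 2 * n) : interleave n e f ⟨n + m, hk⟩ = f ⟨m, hm⟩ := by
  have h : ¬ (n + m < n) := by omega
  simp only [interleave, dif_neg h]
  congr 1
  exact Fin.ext (by simp)

end AuxGreen


open AuxGreen

/-- Let `S` be a countable regular semigroup each of whose maximal subgroups
(`H`-classes of idempotents) is finite.  Then `S` is ℵ₀-categorical iff for every
`n ≥ 1` the restriction of `~_{S,n}` to `E(S)^n` has finitely many classes. -/
theorem aleph0Categorical_regular_iff_idempotents (S : Type*) [Semigroup S] [Countable S]
    (hreg : ∀ a : S, ∃ x : S, a * x * a = a)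
    (hfin : ∀ e : S, e * e = e → {b : S | GreenH S e b}.Finite) :
    Aleph0Categorical S ↔
      ∀ n : ℕ, 1 ≤ n → ∃ t : Set (Fin n → S), t.Finite ∧
        (∀ b ∈ t, ∀ k, b k * b k = b k) ∧
        ∀ a : Fin n → S, (∀ k, a k * a k = a k) → ∃ b ∈ t, AutRel S b a := by
  constructor
  · -- forward direction
    intro h n hn
    obtain ⟨t, htf, hcov⟩ := h n hn
    refine ⟨{b ∈ t | ∀ k, b k * b k = b k}, htf.subset (Set.sep_subset _ _),
      fun b hb => hb.2, ?_⟩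
    intro a ha
    obtain ⟨b, hb, φ, hφ⟩ := hcov a
    refine ⟨b, ⟨hb, fun k => φ.injective ?_⟩, φ, hφ⟩
    rw [map_mul, hφ k, ha k]
  · -- backward direction
    intro h n hn
    obtain ⟨t₂, ht₂f, _ht₂idem, hcov⟩ := h (2 * n) (by omega)
    -- index embeddings
    have hlo : ∀ k : Fin n, (k : ℕ) < 2 * n := fun k => by have := k.isLt; omega
    have hhi : ∀ k : Fin n, n + (k : ℕ) < 2 * n := fun k => by have := k.isLt; omega
    refine ⟨{c | ∃ b ∈ t₂, ∀ k : Fin n,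
        GreenR S (b ⟨(k : ℕ), hlo k⟩) (c k) ∧ GreenL S (b ⟨n + (k : ℕ), hhi k⟩) (c k)},
      ?_, ?_⟩
    · -- finiteness
      have : {c : Fin n → S | ∃ b ∈ t₂, ∀ k : Fin n,
          GreenR S (b ⟨(k : ℕ), hlo k⟩) (c k) ∧ GreenL S (b ⟨n + (k : ℕ), hhi k⟩) (c k)} ⊆
          ⋃ b ∈ t₂, Set.pi Set.univ (fun k : Fin n =>
            {x | GreenR S (b ⟨(k : ℕ), hlo k⟩) x ∧ GreenL S (b ⟨n + (k : ℕ), hhi k⟩) x}) := by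
        rintro c ⟨b, hb, hc⟩
        exact Set.mem_biUnion hb (fun k _ => hc k)
      refine Set.Finite.subset ?_ this
      exact Set.Finite.biUnion ht₂f (fun b _ =>
        Set.Finite.pi (fun k => RL_inter_finite hreg hfin _ _))
    · -- coverage
      intro a
      have hinv := fun k => exists_inverse hreg (a k)
      choose a' h1 h2 using hinv
      set E : Fin (2 * n) → S :=
        interleave n (fun k => a k * a' k) (fun k => a' k * a k) with hE
      have hEidem : ∀ j, E j * E j = E j := by
        intro j
        rw [hE]
        by_cases hj : (j : ℕ) < n
        · have hthis : j = ⟨(j : ℕ), j.isLt⟩ := rfl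
          rw [hthis, interleave_lo _ _ _ hj]
          exact idem_e (h2 _)
        · have hj' : (j : ℕ) - n < n := by have := j.isLt; omega
          have hj2 : j = ⟨n + ((j : ℕ) - n), by have := j.isLt; omega⟩ :=
            Fin.ext (by simp; omega)
          rw [hj2, interleave_hi _ _ _ hj']
          exact idem_f (h2 _)
      obtain ⟨b, hb, φ, hφ⟩ := hcov E hEidem
      refine ⟨fun k => φ.symm (a k), ⟨b, hb, ?_⟩, φ, fun k => φ.apply_symm_apply (a k)⟩
      intro k
      constructor
      · -- GreenR
        have hRe : GreenR S (a k * a' k) (a k) := by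
          refine greenR_iff.2 ⟨mem_RId.2 (Or.inr ⟨a' k, rfl⟩),
            mem_RId.2 (Or.inr ⟨a k, (h1 k).symm⟩)⟩
        have hφb : φ (b ⟨(k : ℕ), hlo k⟩) = a k * a' k := by
          rw [hφ, hE, interleave_lo _ _ _ k.isLt]
        have := greenR_map φ.symm (hφb ▸ hRe)
        simpa using this
      · -- GreenL
        have hLf : GreenL S (a' k * a k) (a k) := by
          refine greenL_iff.2 ⟨mem_LId.2 (Or.inr ⟨a' k, rfl⟩),
            mem_LId.2 (Or.inr ⟨a k, ?_⟩)⟩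
          rw [← mul_assoc, h1 k]
        have hφb : φ (b ⟨n + (k : ℕ), hhi k⟩) = a' k * a k := by
          rw [hφ, hE, interleave_hi _ _ _ k.isLt]
        have := greenL_map φ.symm (hφb ▸ hLf)
        simpa using this
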